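/- Let T̄ > 0 and γ > 0. Let A : [0,∞) → ℝ^{n×n} be continuous with A(τ) Metzler for every τ and A(τ) = A(T̄) for all τ ≥ T̄; let E_c : [0,∞) → ℝ^{n×p_c}, C_c : [0,∞) → ℝ^{q_c×n}, F_c : [0,∞) → ℝ^{q_c×p_c} be continuous, entrywise nonnegative, and constant for τ ≥ T̄; let J ≥ 0, E_d ≥ 0, C_d ≥ 0, F_d ≥ 0 be constant matrices; let Φ be the state-transition matrix of A, and for λ ∈ ℝ^n set v(τ) := Φ(τ,0)λ + ∫₀^{τ} Φ(τ,s) E_c(s) 𝟙 ds. Then for any λ > 0 the following are equivalent: (a) A(T̄)v(T̄) + E_c(T̄)𝟙 < 0, C_c(T̄)v(T̄) + F_c(T̄)𝟙 < γ𝟙, J v(θ) − λ + E_d𝟙 < 0 for all θ ≥ T̄, C_c(τ)v(τ) + F_c(τ)𝟙 < γ𝟙 for all τ ≥ 0, and C_d v(θ) + F_d𝟙 < γ𝟙 for all θ ≥ T̄; (b) A(T̄)v(T̄) + E_c(T̄)𝟙 < 0, C_c(T̄)v(T̄) + F_c(T̄)𝟙 < γ𝟙, J v(T̄) − λ + E_d𝟙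 < 0, C_c(τ)v(τ) + F_c(τ)𝟙 < γ𝟙 for all τ ∈ [0,T̄], and C_d v(T̄) + F_d𝟙 < γ𝟙. -/

import Mathlib

open Matrix Set intervalIntegral

/-- A square real matrix is Metzler if all its off-diagonal entries are nonnegative. -/
def Metzler {n : ℕ} (A : Matrix (Fin n) (Fin n) ℝ) : Prop :=
  ∀ i j, i ≠ j → 0 ≤ A i j

namespace MinDwellAux

open NormedSpace

variable {n : ℕ}

/-- Row-sum style bound for `mulVec` in the sup norm. -/
lemma norm_mulVec_le (A : Matrix (Fin n) (Fin n) ℝ) (z : Fin n → ℝ) :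
    ‖A *ᵥ z‖ ≤ (∑ i, ∑ j, |A i j|) * ‖z‖ := by
  have hC : (0:ℝ) ≤ ∑ i, ∑ j, |A i j| :=
    Finset.sum_nonneg fun i _ => Finset.sum_nonneg fun j _ => abs_nonneg _
  rw [pi_norm_le_iff_of_nonneg (mul_nonneg hC (norm_nonneg _))]
  intro i
  have h1 : ‖(A *ᵥ z) i‖ ≤ ∑ j, |A i j| * ‖z‖ := by
    calc ‖(A *ᵥ z) i‖ = |∑ j, A i j * z j| := rfl
    _ ≤ ∑ j, |A i j * z j| := Finset.abs_sum_le_sum_abs _ _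
    _ ≤ ∑ j, |A i j| * ‖z‖ := by
        refine Finset.sum_le_sum fun j _ => ?_
        rw [abs_mul]
        exact mul_le_mul_of_nonneg_left (norm_le_pi_norm z j) (abs_nonneg _)
  refine h1.trans ?_
  rw [← Finset.sum_mul]
  refine mul_le_mul_of_nonneg_right ?_ (norm_nonneg _)
  exact Finset.single_le_sum (f := fun i => ∑ j, |A i j|)
    (fun i _ => Finset.sum_nonneg fun j _ => abs_nonneg _) (Finset.mem_univ i)

/-- Grönwall comparison for linear time-varying ODEs on `[0, b]`. -/
lemma lin_gronwall (B : ℝ → Matrix (Fin n) (Fin n) ℝ) (hB : Continuous B) (b : ℝ)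
    (hb : 0 ≤ b) :
    ∃ K : ℝ, 0 ≤ K ∧ (∀ t ∈ Icc 0 b, ∀ z, ‖B t *ᵥ z‖ ≤ K * ‖z‖) ∧
      ∀ a, 0 ≤ a → a ≤ b → ∀ f g : ℝ → Fin n → ℝ,
        ContinuousOn f (Icc a b) →
        (∀ t ∈ Ico a b, HasDerivWithinAt f (B t *ᵥ f t) (Ici t) t) →
        ContinuousOn g (Icc a b) →
        (∀ t ∈ Ico a b, HasDerivWithinAt g (B t *ᵥ g t) (Ici t) t) →
        ∀ t ∈ Icc a b, dist (f t) (g t) ≤ dist (f a) (g a) * Real.exp (K * (t - a)) := by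
  obtain ⟨C, hC⟩ : ∃ C, ∀ t ∈ Icc (0:ℝ) b, (∑ i, ∑ j, |B t i j|) ≤ C := by
    rcases isCompact_Icc (a := (0:ℝ)) (b := b) |>.exists_bound_of_continuousOn
      (f := fun t => fun (p : Fin n × Fin n) => B t p.1 p.2) (by fun_prop) with ⟨C0, hC0⟩
    refine ⟨n * n * C0, fun t ht => ?_⟩
    have hb' : ∀ i j, |B t i j| ≤ C0 := fun i j =>
      le_trans (norm_le_pi_norm (fun p : Fin n × Fin n => B t p.1 p.2) (i, j)) (hC0 t ht)
    calc (∑ i, ∑ j, |B t i j|) ≤ ∑ _i : Fin n, ∑ _j : Fin n, C0 :=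
          Finset.sum_le_sum fun i _ => Finset.sum_le_sum fun j _ => hb' i j
    _ = n * n * C0 := by simp [mul_assoc]
  set K : ℝ := max C 0 with hK
  have hK0 : 0 ≤ K := le_max_right _ _
  have hKC : C ≤ K := le_max_left _ _
  have hbound : ∀ t ∈ Icc (0:ℝ) b, ∀ z, ‖B t *ᵥ z‖ ≤ K * ‖z‖ := by
    intro t ht z
    exact (norm_mulVec_le _ _).trans
      (mul_le_mul_of_nonneg_right ((hC t ht).trans hKC) (norm_nonneg _))
  refine ⟨K, hK0, hbound, ?_⟩
  intro a ha hab f g hf hf' hg hg'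
  set V : ℝ → (Fin n → ℝ) → (Fin n → ℝ) := fun t x => B (max 0 (min t b)) *ᵥ x with hV
  have hmem : ∀ t, max 0 (min t b) ∈ Icc (0:ℝ) b :=
    fun t => ⟨le_max_left _ _, max_le hb (min_le_right _ _)⟩
  have hVlip : ∀ t, LipschitzWith K.toNNReal (V t) := by
    intro t
    apply LipschitzWith.of_dist_le_mul
    intro x y
    have h2 : V t x - V t y = B (max 0 (min t b)) *ᵥ (x - y) := by
      simp [hV, Matrix.mulVec_sub]
    rw [dist_eq_norm, h2, dist_eq_norm]
    have := hbound _ (hmem t) (x - y)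
    rwa [Real.coe_toNNReal _ hK0]
  have hVeq : ∀ t ∈ Ico a b, ∀ x, V t x = B t *ᵥ x := by
    intro t ht x
    have h1 : min t b = t := min_eq_left ht.2.le
    have h2 : max 0 t = t := max_eq_right (ha.trans ht.1)
    simp [hV, h1, h2]
  intro t ht
  have := dist_le_of_trajectories_ODE (v := V) (K := K.toNNReal) hVlip hf
    (fun s hs => hVeq s hs (f s) ▸ hf' s hs)
    hg (fun s hs => hVeq s hs (g s) ▸ hg' s hs) (le_refl _) t ht
  rwa [Real.coe_toNNReal _ hK0] at this

/-- Uniqueness for linear time-varying ODEs. -/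
lemma lin_unique (B : ℝ → Matrix (Fin n) (Fin n) ℝ) (hB : Continuous B) {a b : ℝ}
    (ha : 0 ≤ a) (hab : a ≤ b) (f g : ℝ → Fin n → ℝ)
    (hf : ContinuousOn f (Icc a b))
    (hf' : ∀ t ∈ Ico a b, HasDerivWithinAt f (B t *ᵥ f t) (Ici t) t)
    (hg : ContinuousOn g (Icc a b))
    (hg' : ∀ t ∈ Ico a b, HasDerivWithinAt g (B t *ᵥ g t) (Ici t) t)
    (hfg : f a = g a) : EqOn f g (Icc a b) := by
  obtain ⟨K, hK0, -, hgr⟩ := lin_gronwall B hB b (ha.trans hab)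
  intro t ht
  have := hgr a ha hab f g hf hf' hg hg' t ht
  rw [hfg, dist_self, zero_mul] at this
  exact dist_le_zero.mp this

attribute [local instance] Matrix.linftyOpNormedRing Matrix.linftyOpNormedAlgebra

noncomputable def entryCLM (i j : Fin n) : Matrix (Fin n) (Fin n) ℝ →L[ℝ] ℝ :=
  LinearMap.toContinuousLinearMap
    { toFun := fun A => A i j
      map_add' := fun _ _ => rfl
      map_smul' := fun _ _ => rfl }

lemma entryCLM_apply (i j : Fin n) (A : Matrix (Fin n) (Fin n) ℝ) :
    entryCLM i j A = A i j := rfl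

noncomputable def evalCLM (c : Fin n → ℝ) : Matrix (Fin n) (Fin n) ℝ →L[ℝ] (Fin n → ℝ) :=
  LinearMap.toContinuousLinearMap
    { toFun := fun A => A *ᵥ c
      map_add' := fun A B => Matrix.add_mulVec A B c
      map_smul' := fun r A => Matrix.smul_mulVec r A c }

/-- Derivative of `r ↦ exp(r • M) *ᵥ c`. -/
lemma exp_mulVec_hasDerivAt (M : Matrix (Fin n) (Fin n) ℝ) (c : Fin n → ℝ) (u : ℝ) :
    HasDerivAt (fun r : ℝ => exp (r • M) *ᵥ c) ((exp (u • M) * M) *ᵥ c) u := by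
  have h1 : HasDerivAt (fun r : ℝ => exp (r • M)) (exp (u • M) * M) u :=
    hasDerivAt_exp_smul_const M u
  exact ((evalCLM c).hasFDerivAt.comp_hasDerivAt u h1)

lemma exp_mulVec_continuous (M : Matrix (Fin n) (Fin n) ℝ) (c : Fin n → ℝ) :
    Continuous (fun r : ℝ => exp (r • M) *ᵥ c) :=
  continuous_iff_continuousAt.mpr fun u => (exp_mulVec_hasDerivAt M c u).continuousAt

lemma exp_commute_mulVec (M : Matrix (Fin n) (Fin n) ℝ) (r : ℝ) (x : Fin n → ℝ) :
    (exp (r • M) * M) *ᵥ x = M *ᵥ (exp (r • M) *ᵥ x) := by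
  have hcomm : Commute (exp (r • M)) M := ((Commute.refl M).smul_left r).exp_left
  rw [Matrix.mulVec_mulVec, hcomm.eq]

/-- FTC for the matrix exponential. -/
lemma exp_integral (M : Matrix (Fin n) (Fin n) ℝ) (x : Fin n → ℝ) (u : ℝ) :
    (∫ r in (0:ℝ)..u, (exp (r • M) * M) *ᵥ x) = exp (u • M) *ᵥ x - x := by
  have hcont : Continuous (fun r : ℝ => (exp (r • M) * M) *ᵥ x) := by
    have : (fun r : ℝ => (exp (r • M) * M) *ᵥ x)
        = fun r : ℝ => exp (r • M) *ᵥ (M *ᵥ x) := by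
      funext r; rw [Matrix.mulVec_mulVec]
    rw [this]; exact exp_mulVec_continuous M (M *ᵥ x)
  have := intervalIntegral.integral_eq_sub_of_hasDerivAt
    (f := fun r : ℝ => exp (r • M) *ᵥ x)
    (f' := fun r : ℝ => (exp (r • M) * M) *ᵥ x)
    (fun t _ => exp_mulVec_hasDerivAt M x t) (hcont.intervalIntegrable 0 u)
  rw [this]; rw [zero_smul, exp_zero, Matrix.one_mulVec]

/-- Entrywise nonnegativity of `exp(r•M)` for Metzler `M`, `r ≥ 0`. -/
lemma exp_entry_nonneg (M : Matrix (Fin n) (Fin n) ℝ)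
    (hM : ∀ i j, i ≠ j → 0 ≤ M i j) {r : ℝ} (hr : 0 ≤ r) (i j : Fin n) :
    0 ≤ exp (r • M) i j := by
  classical
  set c : ℝ := ∑ k, |M k k| with hc
  have hc0 : 0 ≤ c := Finset.sum_nonneg fun k _ => abs_nonneg _
  set N : Matrix (Fin n) (Fin n) ℝ := M + c • 1 with hN
  have hNpos : ∀ a b : Fin n, 0 ≤ N a b := by
    intro a b
    by_cases hab : a = b
    · subst hab
      simp only [hN, Matrix.add_apply, Matrix.smul_apply, Matrix.one_apply_eq, smul_eq_mul,
        mul_one]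
      nlinarith [Finset.single_le_sum (f := fun k => |M k k|)
        (fun k _ => abs_nonneg _) (Finset.mem_univ a), neg_abs_le (M a a)]
    · simp only [hN, Matrix.add_apply, Matrix.smul_apply, Matrix.one_apply_ne hab, smul_eq_mul,
        mul_zero, add_zero]
      exact hM a b hab
  have hsplit : r • M = (-(r*c)) • (1 : Matrix (Fin n) (Fin n) ℝ) + r • N := by
    simp only [hN]
    module
  have hcomm : Commute ((-(r*c)) • (1 : Matrix (Fin n) (Fin n) ℝ)) (r • N) := by
    apply Commute.smul_left
    apply Commute.smul_right
    exact Commute.one_left N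
  have hexp : exp (r • M)
      = exp ((-(r*c)) • (1 : Matrix (Fin n) (Fin n) ℝ)) * exp (r • N) := by
    rw [hsplit]; exact exp_add_of_commute hcomm
  have hexp1 : exp ((-(r*c)) • (1 : Matrix (Fin n) (Fin n) ℝ))
      = Real.exp (-(r*c)) • (1 : Matrix (Fin n) (Fin n) ℝ) := by
    have h0 : ((-(r*c)) • (1 : Matrix (Fin n) (Fin n) ℝ)) = algebraMap ℝ _ (-(r*c)) := by
      simp [Algebra.algebraMap_eq_smul_one]
    rw [h0]; exact (algebraMap_exp_comm (-(r*c))).symm.trans (by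
      rw [Algebra.algebraMap_eq_smul_one, ← Real.exp_eq_exp_ℝ])
  have hNent : ∀ a b : Fin n, 0 ≤ exp (r • N) a b := by
    intro a b
    have hrN : ∀ a b : Fin n, 0 ≤ (r • N) a b := fun a b => by
      simpa using mul_nonneg hr (hNpos a b)
    have hpow : ∀ k : ℕ, ∀ a b : Fin n, 0 ≤ ((r • N) ^ k) a b := by
      intro k
      induction k with
      | zero => intro a b; by_cases hab : a = b <;> simp [pow_zero, Matrix.one_apply, hab]
      | succ m ih =>
        intro a b
        rw [pow_succ, Matrix.mul_apply]
        exact Finset.sum_nonneg fun k _ => mul_nonneg (ih a k) (hrN k b)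
    have hsum : Summable (fun k : ℕ => (k.factorial : ℝ)⁻¹ • (r • N) ^ k) :=
      expSeries_summable' (𝕂 := ℝ) (r • N)
    have hent : exp (r • N) a b = ∑' k : ℕ, (k.factorial : ℝ)⁻¹ * (((r • N) ^ k) a b) := by
      conv_lhs => rw [exp_eq_tsum ℝ]
      have h := ((entryCLM a b).map_tsum hsum)
      simpa [entryCLM_apply, smul_eq_mul] using h
    rw [hent]
    exact tsum_nonneg fun k => mul_nonneg (by positivity) (hpow k a b)
  rw [hexp, hexp1, Matrix.smul_mul, one_mul]
  simp only [Matrix.smul_apply, smul_eq_mul]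
  exact mul_nonneg (Real.exp_pos _).le (hNent i j)

section Phi

variable (At : ℝ → Matrix (Fin n) (Fin n) ℝ) (Φ : ℝ → ℝ → Matrix (Fin n) (Fin n) ℝ)

/-- Columns of `Φ` (paired with any constant vector) solve the linear ODE. -/
lemma Phi_mulVec_deriv
    (hΦ : ∀ s : ℝ, 0 ≤ s → ∀ τ : ℝ, s ≤ τ → ∀ i j,
      HasDerivWithinAt (fun u => Φ u s i j) ((At τ * Φ τ s) i j) (Set.Ici s) τ)
    {s : ℝ} (hs : 0 ≤ s) (x : Fin n → ℝ) {t : ℝ} (hst : s ≤ t) :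
    HasDerivWithinAt (fun u => Φ u s *ᵥ x) (At t *ᵥ (Φ t s *ᵥ x)) (Ici s) t := by
  have key : HasDerivWithinAt (fun u => Φ u s *ᵥ x) ((At t * Φ t s) *ᵥ x) (Ici s) t := by
    rw [hasDerivWithinAt_pi]
    intro i
    have heq : (fun u => (Φ u s *ᵥ x) i) = fun u => ∑ j, Φ u s i j * x j := by
      funext u; simp [Matrix.mulVec, dotProduct]
    have hde : ((At t * Φ t s) *ᵥ x) i = ∑ j, (At t * Φ t s) i j * x j := by
      simp [Matrix.mulVec, dotProduct]
    rw [heq, hde]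
    exact HasDerivWithinAt.fun_sum fun j _ => (hΦ s hs t hst i j).mul_const (x j)
  rwa [← Matrix.mulVec_mulVec] at key

lemma Phi_mulVec_continuousOn
    (hΦ : ∀ s : ℝ, 0 ≤ s → ∀ τ : ℝ, s ≤ τ → ∀ i j,
      HasDerivWithinAt (fun u => Φ u s i j) ((At τ * Φ τ s) i j) (Set.Ici s) τ)
    {s : ℝ} (hs : 0 ≤ s) (x : Fin n → ℝ) :
    ContinuousOn (fun u => Φ u s *ᵥ x) (Ici s) := fun t ht =>
  (Phi_mulVec_deriv At Φ hΦ hs x ht).continuousWithinAt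

end Phi

/-- Monotonicity of `mulVec` for entrywise-nonnegative matrices. -/
lemma mulVec_mono {m k : ℕ} (Q : Matrix (Fin m) (Fin k) ℝ) (hQ : ∀ i j, 0 ≤ Q i j)
    {y z : Fin k → ℝ} (h : ∀ j, y j ≤ z j) (i : Fin m) : (Q *ᵥ y) i ≤ (Q *ᵥ z) i := by
  simp only [Matrix.mulVec, dotProduct]
  exact Finset.sum_le_sum fun j _ => mul_le_mul_of_nonneg_left (h j) (hQ i j)

end MinDwellAux
namespace MinDwellAux

open NormedSpace

/-- The key monotonicity: under condition (a-1), `v` is entrywise non-increasing past `Tb`. -/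
lemma v_le {n pc : ℕ} (Tb : ℝ) (hTb : 0 < Tb)
    (At : ℝ → Matrix (Fin n) (Fin n) ℝ) (Ec : ℝ → Matrix (Fin n) (Fin pc) ℝ)
    (hA : Continuous At) (hEc : Continuous Ec)
    (hAM : ∀ τ : ℝ, Metzler (At τ))
    (hAc : ∀ τ : ℝ, Tb ≤ τ → At τ = At Tb)
    (hEcc : ∀ τ : ℝ, Tb ≤ τ → Ec τ = Ec Tb)
    (Φ : ℝ → ℝ → Matrix (Fin n) (Fin n) ℝ)
    (hΦ0 : ∀ s : ℝ, 0 ≤ s → Φ s s = 1)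
    (hΦ : ∀ s : ℝ, 0 ≤ s → ∀ τ : ℝ, s ≤ τ → ∀ i j,
      HasDerivWithinAt (fun u => Φ u s i j) ((At τ * Φ τ s) i j) (Set.Ici s) τ)
    (lam : Fin n → ℝ) (v : ℝ → Fin n → ℝ)
    (hv : ∀ τ : ℝ, v τ = Φ τ 0 *ᵥ lam + ∫ s in (0:ℝ)..τ, Φ τ s *ᵥ (Ec s *ᵥ fun _ => (1:ℝ)))
    (h1 : ∀ i, (At Tb *ᵥ v Tb + Ec Tb *ᵥ (fun _ => (1:ℝ))) i < 0) :
    ∀ θ : ℝ, Tb ≤ θ → ∀ i, v θ i ≤ v Tb i := by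
  intro θ hθ
  have hθ0 : (0:ℝ) ≤ θ := hTb.le.trans hθ
  have hu : (0:ℝ) ≤ θ - Tb := sub_nonneg.mpr hθ
  have hccont : Continuous (fun s => Ec s *ᵥ (fun _ => (1:ℝ))) := by
    refine continuous_pi fun i => ?_
    simp only [Matrix.mulVec, dotProduct]
    exact continuous_finset_sum _ fun j _ =>
      ((continuous_apply j).comp ((continuous_apply i).comp hEc)).mul continuous_const
  have hce : ∀ s, Tb ≤ s → Ec s *ᵥ (fun _ => (1:ℝ)) = Ec Tb *ᵥ (fun _ => (1:ℝ)) :=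
    fun s hs => by rw [hEcc s hs]
  -- S1: exponential form of `Φ θ s` for `s ≥ Tb`
  have hS1 : ∀ s, Tb ≤ s → s ≤ θ → ∀ x : Fin n → ℝ,
      Φ θ s *ᵥ x = exp ((θ - s) • At Tb) *ᵥ x := by
    intro s hs hsθ x
    have hs0 : (0:ℝ) ≤ s := hTb.le.trans hs
    have hgderiv : ∀ t : ℝ, HasDerivAt (fun t => exp ((t - s) • At Tb) *ᵥ x)
        ((exp ((t - s) • At Tb) * At Tb) *ᵥ x) t := by
      intro t
      have h1' := exp_mulVec_hasDerivAt (At Tb) x (t - s)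
      have h2 : HasDerivAt (fun t : ℝ => t - s) 1 t := (hasDerivAt_id t).sub_const s
      have := HasDerivAt.scomp t h1' h2
      simpa [Function.comp_def] using this
    have key := lin_unique At hA hs0 hsθ (fun t => Φ t s *ᵥ x)
      (fun t => exp ((t - s) • At Tb) *ᵥ x)
      ((Phi_mulVec_continuousOn At Φ hΦ hs0 x).mono Icc_subset_Ici_self)
      (fun t ht => (Phi_mulVec_deriv At Φ hΦ hs0 x ht.1).mono (Ici_subset_Ici.mpr ht.1))
      (((exp_mulVec_continuous (At Tb) x).comp (continuous_id.sub continuous_const)).continuousOn)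
      (fun t ht => by
        have h := (hgderiv t).hasDerivWithinAt (s := Ici t)
        have he : (exp ((t - s) • At Tb) * At Tb) *ᵥ x
            = At t *ᵥ (exp ((t - s) • At Tb) *ᵥ x) := by
          rw [exp_commute_mulVec, hAc t (hs.trans ht.1)]
        rwa [he] at h)
      (by show Φ s s *ᵥ x = exp ((s - s) • At Tb) *ᵥ x
          rw [hΦ0 s hs0, Matrix.one_mulVec, sub_self, zero_smul, exp_zero, Matrix.one_mulVec])
    exact key ⟨hsθ, le_rfl⟩
  -- S2: cocycle property
  have hS2 : ∀ s, 0 ≤ s → s ≤ Tb → ∀ x : Fin n → ℝ,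
      Φ θ s *ᵥ x = Φ θ Tb *ᵥ (Φ Tb s *ᵥ x) := by
    intro s hs0 hsTb x
    have key := lin_unique At hA hTb.le hθ (fun t => Φ t s *ᵥ x)
      (fun t => Φ t Tb *ᵥ (Φ Tb s *ᵥ x))
      ((Phi_mulVec_continuousOn At Φ hΦ hs0 x).mono fun t ht => hsTb.trans ht.1)
      (fun t ht => (Phi_mulVec_deriv At Φ hΦ hs0 x (hsTb.trans ht.1)).mono
        (Ici_subset_Ici.mpr (hsTb.trans ht.1)))
      ((Phi_mulVec_continuousOn At Φ hΦ hTb.le _).mono Icc_subset_Ici_self)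
      (fun t ht => (Phi_mulVec_deriv At Φ hΦ hTb.le _ ht.1).mono (Ici_subset_Ici.mpr ht.1))
      (by show Φ Tb s *ᵥ x = Φ Tb Tb *ᵥ (Φ Tb s *ᵥ x)
          rw [hΦ0 Tb hTb.le, Matrix.one_mulVec])
    exact key ⟨hθ, le_rfl⟩
  -- S3: continuity of `s ↦ Φ Tb s *ᵥ x` on `[0, Tb]`
  have hS3 : ∀ x : Fin n → ℝ, ContinuousOn (fun s => Φ Tb s *ᵥ x) (Icc 0 Tb) := by
    intro x
    obtain ⟨K, hK0, hKb, hgr⟩ := lin_gronwall At hA Tb hTb.le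
    set D : ℝ := ‖x‖ * Real.exp (K * Tb) with hD
    have hD0 : 0 ≤ D := mul_nonneg (norm_nonneg _) (Real.exp_pos _).le
    have hbnd : ∀ s t : ℝ, 0 ≤ s → s ≤ t → t ≤ Tb → ‖Φ t s *ᵥ x‖ ≤ D := by
      intro s t hs hst htb
      have h := hgr s hs (hst.trans htb) (fun u => Φ u s *ᵥ x) (fun _ => 0)
        ((Phi_mulVec_continuousOn At Φ hΦ hs x).mono fun u hu => hu.1)
        (fun u hu => (Phi_mulVec_deriv At Φ hΦ hs x hu.1).mono (Ici_subset_Ici.mpr hu.1))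
        continuousOn_const
        (fun u _ => by rw [Matrix.mulVec_zero]; exact hasDerivWithinAt_const _ _ _)
        t ⟨hst, htb⟩
      have h' : dist (Φ t s *ᵥ x) (0 : Fin n → ℝ)
          ≤ dist (Φ s s *ᵥ x) (0 : Fin n → ℝ) * Real.exp (K * (t - s)) := h
      rw [dist_zero_right, dist_zero_right, hΦ0 s hs, Matrix.one_mulVec] at h'
      refine h'.trans ?_
      rw [hD]
      exact mul_le_mul_of_nonneg_left
        (Real.exp_le_exp.mpr (by nlinarith)) (norm_nonneg x)
    have hstep1 : ∀ s' s : ℝ, 0 ≤ s' → s' ≤ s → s ≤ Tb →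
        ‖Φ s s' *ᵥ x - x‖ ≤ K * D * (s - s') := by
      intro s' s hs' hss hsb
      have hmvt := norm_image_sub_le_of_norm_deriv_right_le_segment
        (f := fun u => Φ u s' *ᵥ x) (f' := fun u => At u *ᵥ (Φ u s' *ᵥ x)) (C := K * D)
        ((Phi_mulVec_continuousOn At Φ hΦ hs' x).mono fun u hu => hu.1)
        (fun u hu => (Phi_mulVec_deriv At Φ hΦ hs' x hu.1).mono (Ici_subset_Ici.mpr hu.1))
        (fun u hu => by
          refine (hKb u ⟨hs'.trans hu.1, hu.2.le.trans hsb⟩ _).trans ?_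
          exact mul_le_mul_of_nonneg_left (hbnd s' u hs' hu.1 (hu.2.le.trans hsb)) hK0)
        s ⟨hss, le_rfl⟩
      have h' : ‖Φ s s' *ᵥ x - Φ s' s' *ᵥ x‖ ≤ K * D * (s - s') := hmvt
      rwa [hΦ0 s' hs', Matrix.one_mulVec] at h'
    have hlip : ∀ s' s : ℝ, 0 ≤ s' → s' ≤ s → s ≤ Tb →
        dist (Φ Tb s' *ᵥ x) (Φ Tb s *ᵥ x) ≤ (K * D * Real.exp (K * Tb)) * (s - s') := by
      intro s' s hs' hss hsb
      have h := hgr s (hs'.trans hss) hsb (fun u => Φ u s' *ᵥ x) (fun u => Φ u s *ᵥ x)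
        ((Phi_mulVec_continuousOn At Φ hΦ hs' x).mono fun u hu => hss.trans hu.1)
        (fun u hu => (Phi_mulVec_deriv At Φ hΦ hs' x (hss.trans hu.1)).mono
          (Ici_subset_Ici.mpr (hss.trans hu.1)))
        ((Phi_mulVec_continuousOn At Φ hΦ (hs'.trans hss) x).mono fun u hu => hu.1)
        (fun u hu => (Phi_mulVec_deriv At Φ hΦ (hs'.trans hss) x hu.1).mono
          (Ici_subset_Ici.mpr hu.1))
        Tb ⟨hsb, le_rfl⟩
      have h' : dist (Φ Tb s' *ᵥ x) (Φ Tb s *ᵥ x)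
          ≤ dist (Φ s s' *ᵥ x) (Φ s s *ᵥ x) * Real.exp (K * (Tb - s)) := h
      rw [hΦ0 s (hs'.trans hss), Matrix.one_mulVec, dist_eq_norm] at h'
      refine h'.trans ?_
      have h1' := hstep1 s' s hs' hss hsb
      have h2 : Real.exp (K * (Tb - s)) ≤ Real.exp (K * Tb) :=
        Real.exp_le_exp.mpr (by nlinarith [hs'.trans hss])
      calc ‖Φ s s' *ᵥ x - x‖ * Real.exp (K * (Tb - s))
          ≤ (K * D * (s - s')) * Real.exp (K * Tb) := by
            exact mul_le_mul h1' h2 (Real.exp_pos _).le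
              (mul_nonneg (mul_nonneg hK0 hD0) (sub_nonneg.mpr hss))
      _ = (K * D * Real.exp (K * Tb)) * (s - s') := by ring
    have hlipOn : LipschitzOnWith (K * D * Real.exp (K * Tb)).toNNReal
        (fun s => Φ Tb s *ᵥ x) (Icc 0 Tb) := by
      rw [lipschitzOnWith_iff_dist_le_mul]
      intro s hs s' hs'
      rw [Real.coe_toNNReal _ (mul_nonneg (mul_nonneg hK0 hD0) (Real.exp_pos _).le)]
      rcases le_total s s' with h | h
      · rw [Real.dist_eq, abs_of_nonpos (by linarith), neg_sub]
        exact hlip s s' hs.1 h hs'.2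
      · rw [dist_comm (Φ Tb s *ᵥ x) (Φ Tb s' *ᵥ x), Real.dist_eq, abs_of_nonneg (by linarith)]
        exact hlip s' s hs'.1 h hs.2
    exact hlipOn.continuousOn
  -- entrywise continuity of `Φ Tb ·`
  have hentry : ∀ i j, ContinuousOn (fun s => Φ Tb s i j) (Icc 0 Tb) := by
    intro i j
    have h := (continuous_apply i).comp_continuousOn (hS3 (Pi.single j 1))
    refine h.congr fun s _ => ?_
    simp [Matrix.mulVec_single]
  have hFTbcont : ContinuousOn (fun s => Φ Tb s *ᵥ (Ec s *ᵥ fun _ => (1:ℝ))) (Icc 0 Tb) := by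
    apply continuousOn_pi.mpr
    intro i
    have heq : (fun s => (Φ Tb s *ᵥ (Ec s *ᵥ fun _ => (1:ℝ))) i)
        = fun s => ∑ j, Φ Tb s i j * (Ec s *ᵥ fun _ => (1:ℝ)) j := by
      funext s; simp [Matrix.mulVec, dotProduct]
    rw [heq]
    exact continuousOn_finset_sum _ fun j _ =>
      (hentry i j).mul ((continuous_apply j).comp hccont).continuousOn
  -- integrability pieces
  have hInt1 : IntervalIntegrable (fun s => Φ Tb s *ᵥ (Ec s *ᵥ fun _ => (1:ℝ)))
      MeasureTheory.volume 0 Tb := by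
    apply ContinuousOn.intervalIntegrable
    rwa [uIcc_of_le hTb.le]
  set Pl : (Fin n → ℝ) →L[ℝ] (Fin n → ℝ) :=
    LinearMap.toContinuousLinearMap (Matrix.mulVecLin (Φ θ Tb)) with hPldef
  have hPl : ∀ y, Pl y = Φ θ Tb *ᵥ y := fun y => rfl
  have hEq0Tb : ∀ s ∈ Icc (0:ℝ) Tb,
      Φ θ s *ᵥ (Ec s *ᵥ fun _ => (1:ℝ)) = Pl (Φ Tb s *ᵥ (Ec s *ᵥ fun _ => (1:ℝ))) :=
    fun s hs => by rw [hPl]; exact hS2 s hs.1 hs.2 _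
  have hcont2 : ContinuousOn (fun s => Φ θ s *ᵥ (Ec s *ᵥ fun _ => (1:ℝ))) (Icc 0 Tb) :=
    (Pl.continuous.comp_continuousOn hFTbcont).congr fun s hs => hEq0Tb s hs
  have hInt2 : IntervalIntegrable (fun s => Φ θ s *ᵥ (Ec s *ᵥ fun _ => (1:ℝ)))
      MeasureTheory.volume 0 Tb := by
    apply ContinuousOn.intervalIntegrable
    rwa [uIcc_of_le hTb.le]
  have hEqTbθ : ∀ s ∈ Icc Tb θ,
      Φ θ s *ᵥ (Ec s *ᵥ fun _ => (1:ℝ))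
        = (fun r => exp (r • At Tb) *ᵥ (Ec Tb *ᵥ fun _ => (1:ℝ))) (θ - s) :=
    fun s hs => by rw [hce s hs.1, hS1 s hs.1 hs.2]
  have hcont3 : ContinuousOn (fun s => Φ θ s *ᵥ (Ec s *ᵥ fun _ => (1:ℝ))) (Icc Tb θ) :=
    (((exp_mulVec_continuous (At Tb) (Ec Tb *ᵥ fun _ => (1:ℝ))).comp
      (continuous_const.sub continuous_id)).continuousOn).congr hEqTbθ
  have hInt3 : IntervalIntegrable (fun s => Φ θ s *ᵥ (Ec s *ᵥ fun _ => (1:ℝ)))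
      MeasureTheory.volume Tb θ := by
    apply ContinuousOn.intervalIntegrable
    rwa [uIcc_of_le hθ]
  -- the integral formula for `v θ`
  have hI1 : (∫ s in (0:ℝ)..Tb, Φ θ s *ᵥ (Ec s *ᵥ fun _ => (1:ℝ)))
      = Pl (∫ s in (0:ℝ)..Tb, Φ Tb s *ᵥ (Ec s *ᵥ fun _ => (1:ℝ))) := by
    rw [← Pl.intervalIntegral_comp_comm hInt1]
    apply intervalIntegral.integral_congr
    rw [uIcc_of_le hTb.le]
    exact hEq0Tb
  have hI2 : (∫ s in Tb..θ, Φ θ s *ᵥ (Ec s *ᵥ fun _ => (1:ℝ)))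
      = ∫ r in (0:ℝ)..(θ - Tb), exp (r • At Tb) *ᵥ (Ec Tb *ᵥ fun _ => (1:ℝ)) := by
    have hcongr : (∫ s in Tb..θ, Φ θ s *ᵥ (Ec s *ᵥ fun _ => (1:ℝ)))
        = ∫ s in Tb..θ, (fun r => exp (r • At Tb) *ᵥ (Ec Tb *ᵥ fun _ => (1:ℝ))) (θ - s) := by
      apply intervalIntegral.integral_congr
      rw [uIcc_of_le hθ]
      exact hEqTbθ
    rw [hcongr, intervalIntegral.integral_comp_sub_left
      (fun r => exp (r • At Tb) *ᵥ (Ec Tb *ᵥ fun _ => (1:ℝ))) θ, sub_self]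
  have hvθ : v θ = exp ((θ - Tb) • At Tb) *ᵥ v Tb
      + ∫ r in (0:ℝ)..(θ - Tb), exp (r • At Tb) *ᵥ (Ec Tb *ᵥ fun _ => (1:ℝ)) := by
    rw [hv θ, ← intervalIntegral.integral_add_adjacent_intervals hInt2 hInt3, hI1, hI2]
    have hlam : Φ θ 0 *ᵥ lam = Pl (Φ Tb 0 *ᵥ lam) := hS2 0 le_rfl hTb.le lam
    rw [hlam, ← add_assoc, ← Pl.map_add, ← hv Tb, hPl, hS1 Tb le_rfl hθ (v Tb)]
  -- difference formula
  have hw : ∀ i, (At Tb *ᵥ v Tb + Ec Tb *ᵥ (fun _ => (1:ℝ))) i < 0 := h1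
  have hIM : IntervalIntegrable (fun r => (exp (r • At Tb) * At Tb) *ᵥ v Tb)
      MeasureTheory.volume 0 (θ - Tb) := by
    have heq : (fun r : ℝ => (exp (r • At Tb) * At Tb) *ᵥ v Tb)
        = fun r : ℝ => exp (r • At Tb) *ᵥ (At Tb *ᵥ v Tb) := by
      funext r; rw [Matrix.mulVec_mulVec]
    rw [heq]
    exact (exp_mulVec_continuous _ _).intervalIntegrable _ _
  have hIe : IntervalIntegrable (fun r => exp (r • At Tb) *ᵥ (Ec Tb *ᵥ fun _ => (1:ℝ)))
      MeasureTheory.volume 0 (θ - Tb) :=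
    (exp_mulVec_continuous _ _).intervalIntegrable _ _
  have hcomb : v θ - v Tb = ∫ r in (0:ℝ)..(θ - Tb),
      exp (r • At Tb) *ᵥ (At Tb *ᵥ v Tb + Ec Tb *ᵥ (fun _ => (1:ℝ))) := by
    have hsum : (∫ r in (0:ℝ)..(θ - Tb),
        exp (r • At Tb) *ᵥ (At Tb *ᵥ v Tb + Ec Tb *ᵥ (fun _ => (1:ℝ))))
        = (∫ r in (0:ℝ)..(θ - Tb), (exp (r • At Tb) * At Tb) *ᵥ v Tb)
          + ∫ r in (0:ℝ)..(θ - Tb), exp (r • At Tb) *ᵥ (Ec Tb *ᵥ fun _ => (1:ℝ)) := by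
      rw [← intervalIntegral.integral_add hIM hIe]
      apply intervalIntegral.integral_congr
      intro r _
      show exp (r • At Tb) *ᵥ (At Tb *ᵥ v Tb + Ec Tb *ᵥ (fun _ => (1:ℝ)))
          = (exp (r • At Tb) * At Tb) *ᵥ v Tb
            + exp (r • At Tb) *ᵥ (Ec Tb *ᵥ fun _ => (1:ℝ))
      rw [Matrix.mulVec_add, Matrix.mulVec_mulVec]
    rw [hsum, exp_integral, hvθ]
    abel
  intro i
  have hIw : IntervalIntegrable
      (fun r => exp (r • At Tb) *ᵥ (At Tb *ᵥ v Tb + Ec Tb *ᵥ (fun _ => (1:ℝ))))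
      MeasureTheory.volume 0 (θ - Tb) :=
    (exp_mulVec_continuous _ _).intervalIntegrable _ _
  have hent : v θ i - v Tb i = ∫ r in (0:ℝ)..(θ - Tb),
      (exp (r • At Tb) *ᵥ (At Tb *ᵥ v Tb + Ec Tb *ᵥ (fun _ => (1:ℝ)))) i := by
    have h := ((ContinuousLinearMap.proj (R := ℝ) (φ := fun _ : Fin n => ℝ) i
      ).intervalIntegral_comp_comm hIw).symm
    have h2 : (v θ - v Tb) i = v θ i - v Tb i := rfl
    rw [← h2, hcomb]
    exact h
  have hneg : (∫ r in (0:ℝ)..(θ - Tb),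
      (exp (r • At Tb) *ᵥ (At Tb *ᵥ v Tb + Ec Tb *ᵥ (fun _ => (1:ℝ)))) i) ≤ 0 := by
    have hpt : ∀ r ∈ Icc (0:ℝ) (θ - Tb),
        0 ≤ -((exp (r • At Tb) *ᵥ (At Tb *ᵥ v Tb + Ec Tb *ᵥ (fun _ => (1:ℝ)))) i) := by
      intro r hr
      have hterm : ∀ j, exp (r • At Tb) i j
          * (At Tb *ᵥ v Tb + Ec Tb *ᵥ (fun _ => (1:ℝ))) j ≤ 0 := fun j =>
        mul_nonpos_of_nonneg_of_nonpos (exp_entry_nonneg (At Tb) (hAM Tb) hr.1 i j) (hw j).le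
      have : (exp (r • At Tb) *ᵥ (At Tb *ᵥ v Tb + Ec Tb *ᵥ (fun _ => (1:ℝ)))) i
          = ∑ j, exp (r • At Tb) i j * (At Tb *ᵥ v Tb + Ec Tb *ᵥ (fun _ => (1:ℝ))) j := by
        simp [Matrix.mulVec, dotProduct]
      rw [this]
      simpa using Finset.sum_nonpos fun j _ => hterm j
    have h := intervalIntegral.integral_nonneg (μ := MeasureTheory.volume) hu hpt
    rw [intervalIntegral.integral_neg] at h
    linarith
  linarith [hent ▸ hneg]

end MinDwellAux

/-- Under minimum dwell-time, the semi-infinite discrete-time conditions (for all `θ ≥ T̄`)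
are equivalent to the finite ones (at `θ = T̄` and `τ ∈ [0, T̄]`). -/
theorem min_dwell_time_discrete_conditions_iff {n pc qc qd pd : ℕ}
    (Tb γ : ℝ) (hTb : 0 < Tb) (hγ : 0 < γ)
    (At : ℝ → Matrix (Fin n) (Fin n) ℝ) (Ec : ℝ → Matrix (Fin n) (Fin pc) ℝ)
    (Cc : ℝ → Matrix (Fin qc) (Fin n) ℝ) (Fc : ℝ → Matrix (Fin qc) (Fin pc) ℝ)
    (J : Matrix (Fin n) (Fin n) ℝ) (Ed : Matrix (Fin n) (Fin pd) ℝ)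
    (Cd : Matrix (Fin qd) (Fin n) ℝ) (Fd : Matrix (Fin qd) (Fin pd) ℝ)
    (hA : Continuous At) (hEc : Continuous Ec) (hCc : Continuous Cc) (hFc : Continuous Fc)
    (hAM : ∀ τ : ℝ, Metzler (At τ))
    (hAc : ∀ τ : ℝ, Tb ≤ τ → At τ = At Tb)
    (hEcc : ∀ τ : ℝ, Tb ≤ τ → Ec τ = Ec Tb)
    (hCcc : ∀ τ : ℝ, Tb ≤ τ → Cc τ = Cc Tb)
    (hFcc : ∀ τ : ℝ, Tb ≤ τ → Fc τ = Fc Tb)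
    (hEcp : ∀ τ : ℝ, ∀ i j, 0 ≤ Ec τ i j)
    (hCcp : ∀ τ : ℝ, ∀ i j, 0 ≤ Cc τ i j)
    (hFcp : ∀ τ : ℝ, ∀ i j, 0 ≤ Fc τ i j)
    (hJp : ∀ i j, 0 ≤ J i j) (hEdp : ∀ i j, 0 ≤ Ed i j)
    (hCdp : ∀ i j, 0 ≤ Cd i j) (hFdp : ∀ i j, 0 ≤ Fd i j)
    -- `Φ` is the state-transition matrix of `A` on `[0, ∞)`
    (Φ : ℝ → ℝ → Matrix (Fin n) (Fin n) ℝ)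
    (hΦ0 : ∀ s : ℝ, 0 ≤ s → Φ s s = 1)
    (hΦ : ∀ s : ℝ, 0 ≤ s → ∀ τ : ℝ, s ≤ τ → ∀ i j,
      HasDerivWithinAt (fun u => Φ u s i j) ((At τ * Φ τ s) i j) (Set.Ici s) τ)
    (lam : Fin n → ℝ) (hlam : ∀ i, 0 < lam i)
    -- `v τ = Φ(τ,0)λ + ∫₀^τ Φ(τ,s)E_c(s)𝟙 ds`
    (v : ℝ → Fin n → ℝ)
    (hv : ∀ τ : ℝ, v τ = Φ τ 0 *ᵥ lam + ∫ s in (0:ℝ)..τ, Φ τ s *ᵥ (Ec s *ᵥ fun _ => (1:ℝ))) :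
    ((∀ i, (At Tb *ᵥ v Tb + Ec Tb *ᵥ (fun _ => (1:ℝ))) i < 0) ∧
     (∀ i, (Cc Tb *ᵥ v Tb + Fc Tb *ᵥ (fun _ => (1:ℝ))) i < γ) ∧
     (∀ θ : ℝ, Tb ≤ θ → ∀ i, (J *ᵥ v θ - lam + Ed *ᵥ (fun _ => (1:ℝ))) i < 0) ∧
     (∀ τ : ℝ, 0 ≤ τ → ∀ i, (Cc τ *ᵥ v τ + Fc τ *ᵥ (fun _ => (1:ℝ))) i < γ) ∧
     (∀ θ : ℝ, Tb ≤ θ → ∀ i, (Cd *ᵥ v θ + Fd *ᵥ (fun _ => (1:ℝ))) i < γ))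
    ↔
    ((∀ i, (At Tb *ᵥ v Tb + Ec Tb *ᵥ (fun _ => (1:ℝ))) i < 0) ∧
     (∀ i, (Cc Tb *ᵥ v Tb + Fc Tb *ᵥ (fun _ => (1:ℝ))) i < γ) ∧
     (∀ i, (J *ᵥ v Tb - lam + Ed *ᵥ (fun _ => (1:ℝ))) i < 0) ∧
     (∀ τ ∈ Set.Icc (0:ℝ) Tb, ∀ i, (Cc τ *ᵥ v τ + Fc τ *ᵥ (fun _ => (1:ℝ))) i < γ) ∧
     (∀ i, (Cd *ᵥ v Tb + Fd *ᵥ (fun _ => (1:ℝ))) i < γ)) := by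
  constructor
  · rintro ⟨h1, h2, h3, h4, h5⟩
    exact ⟨h1, h2, h3 Tb le_rfl, fun τ hτ => h4 τ hτ.1, h5 Tb le_rfl⟩
  · rintro ⟨h1, h2, h3, h4, h5⟩
    have hle : ∀ θ : ℝ, Tb ≤ θ → ∀ i, v θ i ≤ v Tb i :=
      MinDwellAux.v_le Tb hTb At Ec hA hEc hAM hAc hEcc Φ hΦ0 hΦ lam v hv h1
    refine ⟨h1, h2, ?_, ?_, ?_⟩
    · intro θ hθ i
      have hJ : (J *ᵥ v θ) i ≤ (J *ᵥ v Tb) i :=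
        MinDwellAux.mulVec_mono J hJp (hle θ hθ) i
      have h3i := h3 i
      simp only [Pi.add_apply, Pi.sub_apply] at h3i ⊢
      linarith
    · intro τ hτ i
      rcases le_total τ Tb with h | h
      · exact h4 τ ⟨hτ, h⟩ i
      · have hC : (Cc Tb *ᵥ v τ) i ≤ (Cc Tb *ᵥ v Tb) i :=
          MinDwellAux.mulVec_mono (Cc Tb) (hCcp Tb) (hle τ h) i
        have h2i := h2 i
        rw [hCcc τ h, hFcc τ h]
        simp only [Pi.add_apply] at h2i ⊢
        linarith
    · intro θ hθ i
      have hC : (Cd *ᵥ v θ) i ≤ (Cd *ᵥ v Tb) i :=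
        MinDwellAux.mulVec_mono Cd hCdp (hle θ hθ) i
      have h5i := h5 i
      simp only [Pi.add_apply] at h5i ⊢
      linarith
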